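/- arXiv:2104.09882 — 2 statements merged into one kernel-verified Lean document; each statement's English description precedes it below -/
import Mathlib

section
/- Let V, Q be finite-dimensional inner product spaces, b : V × Q → ℝ bilinear, and s : Q → V the supremizer map ⟨s(p), v⟩_V = b(v,p). Suppose Q_N ⊂ Q is a subspace and V_N ⊂ V a subspace containing s(p) for every p ∈ Q_N. If the global inf-sup constant β := inf_{p ∈ Q, p≠0} ‖s(p)‖_V/‖p‖_Q is positive when restricted to Q_N (i.e. inf_{p∈Q_N,p≠0} ‖s(p)‖/‖p‖ ≥ β_N > 0), then the reduced inf-sup constant satisfies inf_{p ∈ Q_N, p≠0} sup_{v ∈ V_N, v≠0} b(v,p)/(‖v‖_V ‖p‖_Q) ≥ β_N. -/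
/-- Supremizer enrichment guarantees reduced-level inf-sup stability: if the reduced
velocity space contains the supremizers of all reduced pressures, the reduced inf-sup
constant is bounded below by the restricted supremizer-norm ratio `β_N`. -/
theorem supremizer_enrichment_infsup {V Q : Type*}
    [NormedAddCommGroup V] [InnerProductSpace ℝ V] [FiniteDimensional ℝ V]
    [NormedAddCommGroup Q] [InnerProductSpace ℝ Q] [FiniteDimensional ℝ Q]
    (b : V →ₗ[ℝ] Q →ₗ[ℝ] ℝ)
    (s : Q → V) (hs : ∀ p v, (inner ℝ (s p) v : ℝ) = b v p)
    (QN : Submodule ℝ Q) (VN : Submodule ℝ V)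
    (henrich : ∀ p ∈ QN, s p ∈ VN)
    (βN : ℝ) (hβN : 0 < βN)
    (hrestr : ∀ p ∈ QN, p ≠ 0 → βN ≤ ‖s p‖ / ‖p‖) :
    ∀ p ∈ QN, p ≠ 0 → ∃ v ∈ VN, v ≠ 0 ∧ βN ≤ b v p / (‖v‖ * ‖p‖) := by
  intro p hp hp0
  have hratio := hrestr p hp hp0
  have hsp : s p ≠ 0 := by
    intro h
    rw [h, norm_zero, zero_div] at hratio
    exact absurd hratio (not_le.mpr hβN)
  refine ⟨s p, henrich p hp, hsp, ?_⟩
  have hb : b (s p) p = ‖s p‖ ^ 2 := by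
    rw [← hs p (s p), real_inner_self_eq_norm_sq]
  rw [hb]
  have hns : 0 < ‖s p‖ := norm_pos_iff.mpr hsp
  have hnp : 0 < ‖p‖ := norm_pos_iff.mpr hp0
  have : ‖s p‖ ^ 2 / (‖s p‖ * ‖p‖) = ‖s p‖ / ‖p‖ := by
    field_simp
  rw [this]; exact hratio
end

section
/- Let H be a Hilbert space, y₁,...,y_M ∈ H snapshots, and {Φ₁,...,Φ_N} the first N POD basis vectors (orthonormal eigenvectors construction from the correlation matrix with eigenvalues λ₁ ≥ ... ≥ λ_M ≥ 0). Then the POD projection error satisfies Σ_{i=1}^{M} ‖y_i − Σ_{k=1}^{N} ⟨y_i, Φ_k⟩ Φ_k‖²_H = Σ_{k=N+1}^{M} λ_k. -/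
/-- The `k`-th POD basis vector built from the eigenpair `(lam k, v k)` of the snapshot
correlation matrix. -/
noncomputable def podBasis {H : Type*} [NormedAddCommGroup H] [InnerProductSpace ℝ H]
    {M : ℕ} (y : Fin M → H) (lam : Fin M → ℝ) (v : Fin M → Fin M → ℝ) (k : Fin M) : H :=
  if lam k = 0 then 0 else (Real.sqrt (lam k))⁻¹ • ∑ i, v k i • y i

/-- The fundamental POD error identity: the total squared projection error of the
snapshots onto the span of the first `N` POD modes equals the sum of the discarded
eigenvalues of the correlation matrix. -/
theorem pod_error_identity {H : Type*} [NormedAddCommGroup H] [InnerProductSpace ℝ H]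
    (M : ℕ) (y : Fin M → H) (lam : Fin M → ℝ) (v : Fin M → Fin M → ℝ)
    (horth : ∀ k l : Fin M, ∑ i, v k i * v l i = if k = l then (1:ℝ) else 0)
    (heig : ∀ k j : Fin M, ∑ i, (inner ℝ (y j) (y i) : ℝ) * v k i = lam k * v k j)
    (hnn : ∀ k, 0 ≤ lam k)
    (hsorted : ∀ i j : Fin M, i ≤ j → lam j ≤ lam i)
    (N : ℕ) (hN : N ≤ M) :
    ∑ i, ‖y i - ∑ k ∈ Finset.univ.filter (fun k : Fin M => (k : ℕ) < N),
        (inner ℝ (y i) (podBasis y lam v k) : ℝ) • podBasis y lam v k‖^2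
      = ∑ k ∈ Finset.univ.filter (fun k : Fin M => N ≤ (k : ℕ)), lam k := by
  -- inner of snapshot with POD vector
  have hyΦ : ∀ j k, (inner ℝ (y j) (podBasis y lam v k) : ℝ) = Real.sqrt (lam k) * v k j := by
    intro j k
    by_cases h : lam k = 0
    · simp [podBasis, h]
    · have hs : Real.sqrt (lam k) ≠ 0 := by
        simpa [Real.sqrt_eq_zero', not_or] using
          (Real.sqrt_ne_zero (hnn k)).mpr h
      have hsq : Real.sqrt (lam k) * Real.sqrt (lam k) = lam k := Real.mul_self_sqrt (hnn k)
      simp only [podBasis, if_neg h, inner_smul_right, inner_sum]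
      have : ∑ x, v k x * (inner ℝ (y j) (y x) : ℝ) = lam k * v k j := by
        rw [← heig k j]
        exact Finset.sum_congr rfl fun i _ => mul_comm _ _
      rw [this, ← hsq]
      field_simp; rw [Real.sqrt_sq (Real.sqrt_nonneg _)]
  -- orthonormality of POD vectors (with zero modes for zero eigenvalues)
  have hΦΦ : ∀ k l, (inner ℝ (podBasis y lam v k) (podBasis y lam v l) : ℝ)
      = if k = l ∧ lam k ≠ 0 then 1 else 0 := by
    intro k l
    by_cases h : lam k = 0
    · simp [podBasis, h]
    · have hs : Real.sqrt (lam k) ≠ 0 := by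
        simpa using (Real.sqrt_ne_zero (hnn k)).mpr h
      rw [show podBasis y lam v k = (Real.sqrt (lam k))⁻¹ • ∑ i, v k i • y i from if_neg h]
      rw [real_inner_smul_left, sum_inner]
      simp only [real_inner_smul_left, hyΦ]
      have hsum : ∑ j, v k j * (Real.sqrt (lam l) * v l j)
          = Real.sqrt (lam l) * (if k = l then 1 else 0) := by
        rw [← horth k l, Finset.mul_sum]
        exact Finset.sum_congr rfl fun j _ => by ring
      rw [hsum]
      by_cases hkl : k = l
      · subst hkl
        rw [if_pos rfl, mul_one, if_pos (show k = k ∧ lam k ≠ 0 from ⟨rfl, h⟩)]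
        field_simp
      · simp [hkl]
  -- columns of v are orthonormal too
  have hcol : ∀ i j : Fin M, ∑ k, v k i * v k j = if i = j then 1 else 0 := by
    have hA : (Matrix.of v) * (Matrix.of v).transpose = 1 := by
      ext k l
      simpa [Matrix.mul_apply, Matrix.one_apply] using horth k l
    have hA' : (Matrix.of v).transpose * (Matrix.of v) = 1 := mul_eq_one_comm.mp hA
    intro i j
    have h2 := congrFun (congrFun hA' i) j
    simpa [Matrix.mul_apply, Matrix.one_apply] using h2
  -- trace identity for each snapshot
  have hnrm : ∀ i, ‖y i‖^2 = ∑ k, lam k * (v k i)^2 := by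
    intro i
    calc ‖y i‖^2 = (inner ℝ (y i) (y i) : ℝ) := (real_inner_self_eq_norm_sq _).symm
      _ = ∑ j, (inner ℝ (y i) (y j) : ℝ) * (if j = i then 1 else 0) := by
          simp [mul_ite]
      _ = ∑ j, (inner ℝ (y i) (y j) : ℝ) * ∑ k, v k j * v k i := by
          simp_rw [hcol]
      _ = ∑ j, ∑ k, (inner ℝ (y i) (y j) : ℝ) * v k j * v k i := by
          simp_rw [Finset.mul_sum]; exact Finset.sum_congr rfl fun j _ =>
            Finset.sum_congr rfl fun k _ => by ring
      _ = ∑ k, ∑ j, (inner ℝ (y i) (y j) : ℝ) * v k j * v k i := Finset.sum_comm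
      _ = ∑ k, (∑ j, (inner ℝ (y i) (y j) : ℝ) * v k j) * v k i := by
          simp_rw [Finset.sum_mul]
      _ = ∑ k, lam k * (v k i)^2 := by
          refine Finset.sum_congr rfl fun k _ => ?_
          rw [heig k i]; ring
  set S : Finset (Fin M) := Finset.univ.filter (fun k : Fin M => (k : ℕ) < N) with hS
  -- squared inner products
  have hasq : ∀ i k, (inner ℝ (y i) (podBasis y lam v k) : ℝ) * (inner ℝ (y i) (podBasis y lam v k) : ℝ)
      = lam k * (v k i)^2 := by
    intro i k
    rw [hyΦ]
    have := Real.mul_self_sqrt (hnn k)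
    nlinarith [Real.mul_self_sqrt (hnn k)]
  -- per-snapshot error expansion
  have key : ∀ i, ‖y i - ∑ k ∈ S, (inner ℝ (y i) (podBasis y lam v k) : ℝ) • podBasis y lam v k‖^2
      = ‖y i‖^2 - ∑ k ∈ S, lam k * (v k i)^2 := by
    intro i
    rw [@norm_sub_sq_real]
    have T1 : (inner ℝ (y i) (∑ k ∈ S, (inner ℝ (y i) (podBasis y lam v k) : ℝ) • podBasis y lam v k) : ℝ)
        = ∑ k ∈ S, lam k * (v k i)^2 := by
      rw [inner_sum]
      refine Finset.sum_congr rfl fun k _ => ?_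
      rw [real_inner_smul_right, hasq]
    have T2 : ‖(∑ k ∈ S, (inner ℝ (y i) (podBasis y lam v k) : ℝ) • podBasis y lam v k)‖^2
        = ∑ k ∈ S, lam k * (v k i)^2 := by
      rw [← real_inner_self_eq_norm_sq, sum_inner]
      refine Finset.sum_congr rfl fun k hk => ?_
      rw [real_inner_smul_left, inner_sum]
      simp only [real_inner_smul_right, hΦΦ]
      by_cases h : lam k = 0
      · simp [hyΦ, h, Real.sqrt_eq_zero', le_of_eq h.symm]
      · have : ∀ l, ((inner ℝ (y i) (podBasis y lam v l) : ℝ) * (if k = l ∧ lam k ≠ 0 then 1 else 0))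
            = if k = l then (inner ℝ (y i) (podBasis y lam v l) : ℝ) else 0 := by
          intro l
          by_cases hkl : k = l
          · subst hkl; simp [h]
          · simp [hkl]
        simp_rw [this]
        rw [Finset.sum_ite_eq S k (fun l => (inner ℝ (y i) (podBasis y lam v l) : ℝ)), if_pos hk,
          hasq]
    rw [T1, T2]; ring
  simp_rw [key]
  rw [Finset.sum_sub_distrib]
  have hrow : ∀ k, ∑ i, (v k i)^2 = 1 := by
    intro k
    have := horth k k
    simpa [pow_two] using this
  have htot : ∑ i, ‖y i‖^2 = ∑ k, lam k := by
    simp_rw [hnrm]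
    rw [Finset.sum_comm]
    refine Finset.sum_congr rfl fun k _ => ?_
    rw [← Finset.mul_sum, hrow, mul_one]
  have hSsum : ∑ i, ∑ k ∈ S, lam k * (v k i)^2 = ∑ k ∈ S, lam k := by
    rw [Finset.sum_comm]
    refine Finset.sum_congr rfl fun k _ => ?_
    rw [← Finset.mul_sum, hrow, mul_one]
  rw [htot, hSsum]
  have hsplit : ∑ k ∈ S, lam k + ∑ k ∈ Finset.univ.filter (fun k : Fin M => N ≤ (k : ℕ)), lam k
      = ∑ k, lam k := by
    rw [hS]
    have : (Finset.univ.filter (fun k : Fin M => N ≤ (k : ℕ)))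
        = Finset.univ.filter (fun k : Fin M => ¬ ((k : ℕ) < N)) := by
      apply Finset.filter_congr
      intro k _
      simp [not_lt]
    rw [this]
    exact Finset.sum_filter_add_sum_filter_not _ _ _
  linarith
end
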